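/- Let T and N be positive integers, B, V > 0, and Ē_n ≥ 0 for n = 1,…,N. For each round t ∈ {0,…,T−1} and each n, let E_{n,t} be a real number. Define virtual queues by Q_{n,0} = 0 and Q_{n,t+1} = max(Q_{n,t} + E_{n,t} − Ē_n, 0), and let L(Q^t) = (1/2)·Σ_{n=1}^N Q_{n,t}². Let U*_t ≥ 0 for each t, and assume that for every t ∈ {0,…,T−1}: L(Q^{t+1}) − L(Q^t) ≤ B + V·U*_t. Then (1/T)·Σ_{t=0}^{T−1} Σ_{n=1}^N E_{n,t} ≤ Σ_{n=1}^N Ē_n + √(2NB/T + 2NV·(Σ_{t=0}^{T−1} U*_t)/T²). -/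

import Mathlib

/-- Theorem 3(b) of the paper: under the per-round Lyapunov drift bound
`L(Q^{t+1}) − L(Q^t) ≤ B + V·U*_t`, the average per-round energy exceeds the total
per-round budget by at most an `O(√V)` term. -/
theorem stmt_15 (T N : ℕ) (hT : 0 < T) (hN : 0 < N) (B V : ℝ)
    (hB : 0 < B) (hV : 0 < V)
    (Ebar : Fin N → ℝ) (hEbar : ∀ n, 0 ≤ Ebar n)
    (E : Fin N → ℕ → ℝ)
    (Q : Fin N → ℕ → ℝ)
    (hQ0 : ∀ n, Q n 0 = 0)
    (hQrec : ∀ n t, Q n (t + 1) = max (Q n t + E n t - Ebar n) 0)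
    (Ustar : ℕ → ℝ) (hUstar : ∀ t, 0 ≤ Ustar t)
    (hdrift : ∀ t < T,
      (1 / 2 : ℝ) * (∑ n, Q n (t + 1) ^ 2) - (1 / 2 : ℝ) * (∑ n, Q n t ^ 2) ≤
        B + V * Ustar t) :
    (1 / T : ℝ) * ∑ t ∈ Finset.range T, ∑ n, E n t ≤
      (∑ n, Ebar n) +
        Real.sqrt (2 * N * B / T +
          2 * N * V * (∑ t ∈ Finset.range T, Ustar t) / (T : ℝ) ^ 2) := by
  have hTpos : (0:ℝ) < T := by exact_mod_cast hT
  -- Q is nonneg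
  have hQnonneg : ∀ n t, 0 ≤ Q n t := by
    intro n t
    cases t with
    | zero => simp [hQ0]
    | succ t => rw [hQrec]; exact le_max_right _ _
  -- per-n telescoping lower bound
  have hsum : ∀ n, ∑ t ∈ Finset.range T, (E n t - Ebar n) ≤ Q n T := by
    intro n
    have key : ∀ m, ∑ t ∈ Finset.range m, (E n t - Ebar n) ≤ Q n m := by
      intro m
      induction m with
      | zero => simp [hQ0]
      | succ m ih =>
        rw [Finset.sum_range_succ, hQrec]
        calc ∑ t ∈ Finset.range m, (E n t - Ebar n) + (E n m - Ebar n)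
            ≤ Q n m + (E n m - Ebar n) := by linarith
          _ ≤ max (Q n m + E n m - Ebar n) 0 := by
              have := le_max_left (Q n m + E n m - Ebar n) (0:ℝ); linarith
    exact key T
  -- telescoped drift bound
  have hL : (1 / 2 : ℝ) * (∑ n, Q n T ^ 2) ≤
      T * B + V * ∑ t ∈ Finset.range T, Ustar t := by
    have key : ∀ m ≤ T, (1 / 2 : ℝ) * (∑ n, Q n m ^ 2) ≤
        m * B + V * ∑ t ∈ Finset.range m, Ustar t := by
      intro m hm
      induction m with
      | zero => simp [hQ0]
      | succ m ih =>
        have hmT : m < T := hm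
        have ih' := ih (le_of_lt hmT)
        have hd := hdrift m hmT
        rw [Finset.sum_range_succ]
        push_cast
        nlinarith
    exact key T le_rfl
  have hQsq : ∑ n, Q n T ^ 2 ≤ 2 * T * B + 2 * V * ∑ t ∈ Finset.range T, Ustar t := by
    linarith
  -- Cauchy-Schwarz
  have hCS : (∑ n, Q n T) ^ 2 ≤ N * ∑ n, Q n T ^ 2 := by
    have := sq_sum_le_card_mul_sum_sq (s := Finset.univ) (f := fun n : Fin N => Q n T)
    simpa using this
  set X : ℝ := 2 * N * B / T + 2 * N * V * (∑ t ∈ Finset.range T, Ustar t) / (T : ℝ) ^ 2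
    with hX
  have hQT : ∑ n, Q n T ≤ T * Real.sqrt X := by
    have hsqnn : (0:ℝ) ≤ ∑ n, Q n T := Finset.sum_nonneg fun n _ => hQnonneg n T
    have h1 : (∑ n, Q n T) ^ 2 ≤ (T : ℝ)^2 * X := by
      have : (T:ℝ)^2 * X = N * (2 * T * B + 2 * V * ∑ t ∈ Finset.range T, Ustar t) := by
        rw [hX]; field_simp
      rw [this]
      calc (∑ n, Q n T) ^ 2 ≤ N * ∑ n, Q n T ^ 2 := hCS
        _ ≤ N * (2 * T * B + 2 * V * ∑ t ∈ Finset.range T, Ustar t) := by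
            have : (0:ℝ) ≤ N := Nat.cast_nonneg N
            exact mul_le_mul_of_nonneg_left hQsq this
    have hXnn : 0 ≤ X := by
      have hU : 0 ≤ ∑ t ∈ Finset.range T, Ustar t :=
        Finset.sum_nonneg fun t _ => hUstar t
      have : (0:ℝ) ≤ N := Nat.cast_nonneg N
      positivity
    have h2 : ∑ n, Q n T ≤ Real.sqrt ((T:ℝ)^2 * X) := by
      rw [show ∑ n, Q n T = Real.sqrt ((∑ n, Q n T)^2) from (Real.sqrt_sq hsqnn).symm]
      exact Real.sqrt_le_sqrt h1
    rwa [Real.sqrt_mul (by positivity), Real.sqrt_sq hTpos.le] at h2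
  -- conclude
  have hmain : ∑ t ∈ Finset.range T, ∑ n, E n t ≤ T * (∑ n, Ebar n) + T * Real.sqrt X := by
    have h3 : ∑ t ∈ Finset.range T, ∑ n, E n t - T * (∑ n, Ebar n) ≤ ∑ n, Q n T := by
      have := Finset.sum_le_sum (fun n (_ : n ∈ Finset.univ) => hsum n)
      rw [Finset.sum_comm]
      calc ∑ n, ∑ t ∈ Finset.range T, E n t - T * (∑ n, Ebar n)
          = ∑ n, ∑ t ∈ Finset.range T, (E n t - Ebar n) := by
            simp only [Finset.sum_sub_distrib, Finset.sum_const, Finset.card_range, nsmul_eq_mul, Finset.mul_sum]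
        _ ≤ ∑ n, Q n T := this
    linarith
  rw [div_mul_eq_mul_div, one_mul, div_le_iff₀ hTpos]
  calc ∑ t ∈ Finset.range T, ∑ n, E n t ≤ T * (∑ n, Ebar n) + T * Real.sqrt X := hmain
    _ = ((∑ n, Ebar n) + Real.sqrt X) * T := by ring
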